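/- Assume A and B are continuous and bounded, 𝒥_n(t) is invertible for every n ∈ ℤ and t ∈ [t_n, t_{n+1}] with M := sup_{n∈ℤ} sup_{t∈[t_n,t_{n+1}]} |𝒥_n(t)^{-1}| < ∞, every H(n) = Z_n(t_{n+1}) is invertible, and the difference equation φ(n+1) = H(n)φ(n) is exponentially stable, i.e. |Φ(n)Φ(k+1)^{-1}| ≤ Kρ^{n−k} for all n ≥ k with K ≥ 1 and 0 < ρ < 1. For r ∈ ℝ let k(r) be the unique n with r ∈ [t_n, t_{n+1}), and for s, t with k(s) < k(t) define the Cauchy matrix Z(t,s) = Z_{k(t)}(t) · Φ(k(t))Φ(k(s))^{-1} · Z_{k(s)}(s)^{-1}. Then there exists K₄ > 0 such that |Z(t,s)| ≤ K₄ · ρ^{(t−s)/θ} for all s ≤ t with k(s) < k(t). -/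

import Mathlib

open scoped Matrix
open MeasureTheory Filter

attribute [local instance] Matrix.frobeniusSeminormedAddCommGroup
  Matrix.frobeniusNormedAddCommGroup Matrix.frobeniusNormedSpace
  Matrix.frobeniusNormedRing Matrix.frobeniusNormedAlgebra Matrix.frobeniusIsBoundedSMul

noncomputable section

abbrev Mat (q : ℕ) := Matrix (Fin q) (Fin q) ℂ
abbrev Vec (q : ℕ) := EuclideanSpace ℂ (Fin q)

/-- Action of a `q × q` complex matrix on `ℂ^q` with the Euclidean norm. -/
def aMul {q : ℕ} (M : Mat q) (v : Vec q) : Vec q := Matrix.toEuclideanLin M v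

/-- `X(t,s) = X(t) X(s)⁻¹`. -/
def XX {q : ℕ} (X : ℝ → Mat q) (t s : ℝ) : Mat q := X t * (X s)⁻¹

/-- `𝒥_n(t) = I + ∫_{t_n}^t X(t_n,u) B(u) du`. -/
def Jmat {q : ℕ} (X B : ℝ → Mat q) (ts : ℤ → ℝ) (n : ℤ) (r : ℝ) : Mat q :=
  1 + ∫ u in (ts n)..r, XX X (ts n) u * B u

/-- `Z_n(t) = X(t,t_n) 𝒥_n(t)`. -/
def Zmat {q : ℕ} (X B : ℝ → Mat q) (ts : ℤ → ℝ) (n : ℤ) (r : ℝ) : Mat q :=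
  XX X r (ts n) * Jmat X B ts n r

/-- Derivative of `t ↦ X(t)⁻¹` (as `Ring.inverse`). -/
lemma hasDerivAt_Xinv {q : ℕ} {A X : ℝ → Mat q} (hX : ∀ t, HasDerivAt X (A t * X t) t)
    (hXinv : ∀ t, IsUnit (X t)) (t : ℝ) :
    HasDerivAt (fun u => Ring.inverse (X u)) (-((X t)⁻¹ * A t)) t := by
  have h1 := (hasFDerivAt_ringInverse (𝕜 := ℝ) (hXinv t).unit)
  rw [(hXinv t).unit_spec] at h1
  have h2 := h1.comp_hasDerivAt t (hX t)
  refine h2.congr_deriv (Eq.symm ?_)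
  simp only [ContinuousLinearMap.neg_apply, ContinuousLinearMap.mulLeftRight_apply,
    Matrix.coe_units_inv, (hXinv t).unit_spec]
  rw [neg_inj]
  rw [← mul_assoc, mul_assoc ((X t)⁻¹ * A t),
    Matrix.mul_nonsing_inv _ ((Matrix.isUnit_iff_isUnit_det _).mp (hXinv t)), mul_one]

/-- Forward Grönwall bound for the propagator. -/
lemma gron_fwd {q : ℕ} {A X : ℝ → Mat q} (hX : ∀ t, HasDerivAt X (A t * X t) t)
    (hXinv : ∀ t, IsUnit (X t)) {a : ℝ} (ha : ∀ t, ‖A t‖ ≤ a) {s t : ℝ} (hst : s ≤ t) :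
    ‖X t * (X s)⁻¹‖ ≤ ‖(1 : Mat q)‖ * Real.exp (a * (t - s)) := by
  have hd : ∀ u : ℝ, HasDerivAt (fun v => X v * (X s)⁻¹) (A u * X u * (X s)⁻¹) u :=
    fun u => (hX u).mul_const _
  have key := norm_le_gronwallBound_of_norm_deriv_right_le
    (f := fun v => X v * (X s)⁻¹) (f' := fun u => A u * X u * (X s)⁻¹)
    (δ := ‖(1 : Mat q)‖) (K := a) (ε := 0) (a := s) (b := t)
    (continuous_iff_continuousAt.mpr fun u => (hd u).continuousAt).continuousOn
    (fun u _ => (hd u).hasDerivWithinAt) ?_ ?_ t (Set.right_mem_Icc.2 hst)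
  · rwa [gronwallBound_ε0] at key
  · beta_reduce
    rw [Matrix.mul_nonsing_inv _ ((Matrix.isUnit_iff_isUnit_det _).mp (hXinv s))]
  · intro u _
    beta_reduce
    rw [add_zero, mul_assoc]
    calc ‖A u * (X u * (X s)⁻¹)‖ ≤ ‖A u‖ * ‖X u * (X s)⁻¹‖ := norm_mul_le _ _
      _ ≤ a * ‖X u * (X s)⁻¹‖ := mul_le_mul_of_nonneg_right (ha u) (norm_nonneg _)

/-- Backward Grönwall bound for the propagator. -/
lemma gron_bwd {q : ℕ} {A X : ℝ → Mat q} (hX : ∀ t, HasDerivAt X (A t * X t) t)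
    (hXinv : ∀ t, IsUnit (X t)) {a : ℝ} (ha : ∀ t, ‖A t‖ ≤ a) {s t : ℝ} (hst : s ≤ t) :
    ‖X s * (X t)⁻¹‖ ≤ ‖(1 : Mat q)‖ * Real.exp (a * (t - s)) := by
  have hd : ∀ u : ℝ, HasDerivAt (fun v => X s * Ring.inverse (X v))
      (X s * -((X u)⁻¹ * A u)) u := fun u => (hasDerivAt_Xinv hX hXinv u).const_mul (X s)
  have key := norm_le_gronwallBound_of_norm_deriv_right_le
    (f := fun v => X s * Ring.inverse (X v)) (f' := fun u => X s * -((X u)⁻¹ * A u))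
    (δ := ‖(1 : Mat q)‖) (K := a) (ε := 0) (a := s) (b := t)
    (continuous_iff_continuousAt.mpr fun u => (hd u).continuousAt).continuousOn
    (fun u _ => (hd u).hasDerivWithinAt) ?_ ?_ t (Set.right_mem_Icc.2 hst)
  · rw [gronwallBound_ε0] at key
    rwa [Matrix.nonsing_inv_eq_ringInverse]
  · beta_reduce
    rw [← Matrix.nonsing_inv_eq_ringInverse,
      Matrix.mul_nonsing_inv _ ((Matrix.isUnit_iff_isUnit_det _).mp (hXinv s))]
  · intro u _
    beta_reduce
    rw [add_zero]
    have hrw : X s * -((X u)⁻¹ * A u) = -((X s * Ring.inverse (X u)) * A u) := by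
      rw [← Matrix.nonsing_inv_eq_ringInverse, mul_neg, mul_assoc, neg_inj]
    rw [hrw, norm_neg]
    calc ‖(X s * Ring.inverse (X u)) * A u‖
        ≤ ‖X s * Ring.inverse (X u)‖ * ‖A u‖ := norm_mul_le _ _
      _ ≤ ‖X s * Ring.inverse (X u)‖ * a := mul_le_mul_of_nonneg_left (ha u) (norm_nonneg _)
      _ = a * ‖X s * Ring.inverse (X u)‖ := mul_comm _ _

/-- Telescoping bound: `ts k − ts m ≤ (k − m) θ`. -/
lemma tele {ts : ℤ → ℝ} {θ : ℝ} (hgap : ∀ n : ℤ, ts (n + 1) - ts n ≤ θ)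
    (m : ℤ) : ∀ k : ℤ, m ≤ k → ts k - ts m ≤ ((k - m : ℤ) : ℝ) * θ := by
  refine Int.le_induction ?_ ?_
  · simp
  · intro k _ ih
    have h := hgap k
    push_cast at ih ⊢
    linarith

/-- if the difference equation `φ(n+1) = H(n)φ(n)` is exponentially stable
and the inverses `𝒥_n(t)⁻¹` are uniformly bounded, then the Cauchy matrix
`Z(t,s) = Z_{k(t)}(t) Φ(k(t)) Φ(k(s))⁻¹ Z_{k(s)}(s)⁻¹` decays exponentially:
`‖Z(t,s)‖ ≤ K₄ ρ^{(t−s)/θ}` whenever `s ≤ t` lie in intervals `[t_{k(s)}, t_{k(s)+1})`,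
`[t_{k(t)}, t_{k(t)+1})` with `k(s) < k(t)`. -/
theorem cauchy_matrix_exponential_decay {q : ℕ} (hq : 1 ≤ q)
    (ts : ℤ → ℝ) (hts : StrictMono ts)
    (htop : Tendsto ts atTop atTop) (hbot : Tendsto ts atBot atBot)
    (θ : ℝ) (hθpos : 0 < θ) (hθ : IsLUB (Set.range fun n : ℤ => ts (n + 1) - ts n) θ)
    (A B : ℝ → Mat q) (hAcont : Continuous A) (hBcont : Continuous B)
    (hAbdd : ∃ C : ℝ, ∀ t : ℝ, ‖A t‖ ≤ C) (hBbdd : ∃ C : ℝ, ∀ t : ℝ, ‖B t‖ ≤ C)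
    (X : ℝ → Mat q) (hX : ∀ t : ℝ, HasDerivAt X (A t * X t) t)
    (hXinv : ∀ t : ℝ, IsUnit (X t))
    (hJ : ∀ n : ℤ, ∀ r ∈ Set.Icc (ts n) (ts (n + 1)), IsUnit (Jmat X B ts n r))
    (hJbdd : ∃ M : ℝ, ∀ n : ℤ, ∀ r ∈ Set.Icc (ts n) (ts (n + 1)),
      ‖(Jmat X B ts n r)⁻¹‖ ≤ M)
    (hHinv : ∀ n : ℤ, IsUnit (Zmat X B ts n (ts (n + 1))))
    (Φ : ℤ → Mat q) (hΦinv : ∀ n : ℤ, IsUnit (Φ n))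
    (hΦ : ∀ n : ℤ, Φ (n + 1) = Zmat X B ts n (ts (n + 1)) * Φ n)
    (K ρ : ℝ) (hK : 1 ≤ K) (hρ0 : 0 < ρ) (hρ1 : ρ < 1)
    (hstab : ∀ n k : ℤ, k ≤ n → ‖Φ n * (Φ (k + 1))⁻¹‖ ≤ K * ρ ^ (n - k)) :
    ∃ K₄ : ℝ, 0 < K₄ ∧
      ∀ m n : ℤ, m < n →
        ∀ s ∈ Set.Ico (ts m) (ts (m + 1)), ∀ r ∈ Set.Ico (ts n) (ts (n + 1)),
          ‖Zmat X B ts n r * (Φ n * (Φ m)⁻¹) * (Zmat X B ts m s)⁻¹‖ ≤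
            K₄ * Real.rpow ρ ((r - s) / θ) := by
  obtain ⟨Ca, hCa⟩ := hAbdd
  obtain ⟨Cb, hCb⟩ := hBbdd
  obtain ⟨M, hM⟩ := hJbdd
  have ha0 : 0 ≤ Ca := le_trans (norm_nonneg _) (hCa 0)
  have hb0 : 0 ≤ Cb := le_trans (norm_nonneg _) (hCb 0)
  have hgap : ∀ n : ℤ, ts (n + 1) - ts n ≤ θ := fun n => hθ.1 ⟨n, rfl⟩
  have hM0 : 0 ≤ M :=
    le_trans (norm_nonneg _) (hM 0 (ts 0) ⟨le_refl _, (hts (by omega)).le⟩)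
  set c1 : ℝ := ‖(1 : Mat q)‖ with hc1def
  have hc10 : 0 ≤ c1 := norm_nonneg _
  set E : ℝ := c1 * Real.exp (Ca * θ) with hEdef
  have hE0 : 0 ≤ E := mul_nonneg hc10 (Real.exp_pos _).le
  set C1 : ℝ := E * (c1 + E * Cb * θ) with hC1def
  have hC10 : 0 ≤ C1 :=
    mul_nonneg hE0 (add_nonneg hc10 (mul_nonneg (mul_nonneg hE0 hb0) hθpos.le))
  set C3 : ℝ := M * E with hC3def
  have hC30 : 0 ≤ C3 := mul_nonneg hM0 hE0
  refine ⟨max 1 (C1 * K * C3), lt_of_lt_of_le one_pos (le_max_left _ _), ?_⟩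
  intro m n hmn s hs r hr
  -- forward and backward propagator bounds over one window
  have fwd : ∀ k : ℤ, ∀ u ∈ Set.Icc (ts k) (ts (k + 1)), ‖X u * (X (ts k))⁻¹‖ ≤ E := by
    intro k u hu
    refine le_trans (gron_fwd hX hXinv hCa hu.1) ?_
    rw [hEdef]
    exact mul_le_mul_of_nonneg_left
      (Real.exp_le_exp.2 (mul_le_mul_of_nonneg_left (by linarith [hgap k, hu.2]) ha0)) hc10
  have bwd : ∀ k : ℤ, ∀ u ∈ Set.Icc (ts k) (ts (k + 1)), ‖X (ts k) * (X u)⁻¹‖ ≤ E := by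
    intro k u hu
    refine le_trans (gron_bwd hX hXinv hCa hu.1) ?_
    rw [hEdef]
    exact mul_le_mul_of_nonneg_left
      (Real.exp_le_exp.2 (mul_le_mul_of_nonneg_left (by linarith [hgap k, hu.2]) ha0)) hc10
  -- bound on 𝒥
  have hJub : ∀ k : ℤ, ∀ u ∈ Set.Icc (ts k) (ts (k + 1)),
      ‖Jmat X B ts k u‖ ≤ c1 + E * Cb * θ := by
    intro k u hu
    unfold Jmat
    refine le_trans (norm_add_le _ _) (add_le_add_right ?_ _)
    have hnorm : ‖∫ v in (ts k)..u, XX X (ts k) v * B v‖ ≤ E * Cb * |u - ts k| := by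
      refine intervalIntegral.norm_integral_le_of_norm_le_const ?_
      intro v hv
      rw [Set.uIoc_of_le hu.1] at hv
      unfold XX
      calc ‖X (ts k) * (X v)⁻¹ * B v‖ ≤ ‖X (ts k) * (X v)⁻¹‖ * ‖B v‖ := norm_mul_le _ _
        _ ≤ E * Cb := mul_le_mul (bwd k v ⟨hv.1.le, le_trans hv.2 hu.2⟩) (hCb v)
            (norm_nonneg _) hE0
    refine le_trans hnorm ?_
    rw [abs_of_nonneg (by linarith [hu.1])]
    have h1 : u - ts k ≤ θ := by linarith [hu.2, hgap k]
    nlinarith [mul_nonneg hE0 hb0]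
  -- bound on Z
  have hZub : ‖Zmat X B ts n r‖ ≤ C1 := by
    have hrIcc : r ∈ Set.Icc (ts n) (ts (n + 1)) := ⟨hr.1, hr.2.le⟩
    unfold Zmat XX
    exact le_trans (norm_mul_le _ _)
      (mul_le_mul (fwd n r hrIcc) (hJub n r hrIcc) (norm_nonneg _) hE0)
  -- bound on Z⁻¹
  have hZinv : ‖(Zmat X B ts m s)⁻¹‖ ≤ C3 := by
    have hsIcc : s ∈ Set.Icc (ts m) (ts (m + 1)) := ⟨hs.1, hs.2.le⟩
    have heq : (Zmat X B ts m s)⁻¹ = (Jmat X B ts m s)⁻¹ * (X (ts m) * (X s)⁻¹) := by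
      unfold Zmat XX
      rw [Matrix.mul_inv_rev, Matrix.mul_inv_rev,
        Matrix.nonsing_inv_nonsing_inv _ ((Matrix.isUnit_iff_isUnit_det _).mp (hXinv (ts m)))]
    rw [heq]
    exact le_trans (norm_mul_le _ _)
      (mul_le_mul (hM m s hsIcc) (bwd m s hsIcc) (norm_nonneg _) hM0)
  -- stability bound
  have hρnn : 0 ≤ Real.rpow ρ ((r - s) / θ) := Real.rpow_nonneg hρ0.le _
  have hΦb : ‖Φ n * (Φ m)⁻¹‖ ≤ K * Real.rpow ρ ((r - s) / θ) := by
    have h1 := hstab n (m - 1) (by omega)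
    have hm1 : m - 1 + 1 = m := by omega
    rw [hm1] at h1
    refine le_trans h1 ?_
    have hexp : (r - s) / θ ≤ ((n - (m - 1) : ℤ) : ℝ) := by
      rw [div_le_iff₀ hθpos]
      have h2 := tele hgap m (n + 1) (by omega)
      have h3 : r - s ≤ ts (n + 1) - ts m := by
        have := hr.2
        have := hs.1
        linarith
      push_cast at h2 ⊢
      linarith
    have hz : ρ ^ (n - (m - 1)) = Real.rpow ρ (((n - (m - 1) : ℤ) : ℝ)) :=
      (Real.rpow_intCast ρ _).symm
    rw [hz]
    exact mul_le_mul_of_nonneg_left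
      (Real.rpow_le_rpow_of_exponent_ge hρ0 hρ1.le hexp) (by linarith)
  calc ‖Zmat X B ts n r * (Φ n * (Φ m)⁻¹) * (Zmat X B ts m s)⁻¹‖
      ≤ ‖Zmat X B ts n r * (Φ n * (Φ m)⁻¹)‖ * ‖(Zmat X B ts m s)⁻¹‖ := norm_mul_le _ _
    _ ≤ ‖Zmat X B ts n r‖ * ‖Φ n * (Φ m)⁻¹‖ * ‖(Zmat X B ts m s)⁻¹‖ :=
        mul_le_mul_of_nonneg_right (norm_mul_le _ _) (norm_nonneg _)
    _ ≤ C1 * (K * Real.rpow ρ ((r - s) / θ)) * C3 :=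
        mul_le_mul (mul_le_mul hZub hΦb (norm_nonneg _) hC10) hZinv (norm_nonneg _)
          (mul_nonneg hC10 (mul_nonneg (by linarith) hρnn))
    _ = (C1 * K * C3) * Real.rpow ρ ((r - s) / θ) := by ring
    _ ≤ max 1 (C1 * K * C3) * Real.rpow ρ ((r - s) / θ) :=
        mul_le_mul_of_nonneg_right (le_max_right _ _) hρnn
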